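/- If E is not a parent of Y, then S_ICP = S_AS if and only if S_ICP is invariant. -/

import Mathlib

/-- Nodes of the graph: the environment node `E`, predictor nodes `V j` for
`j ∈ {1, …, d}` (represented by `Fin d`), and the response node `Y`. -/
inductive Node (d : ℕ) : Type where
  | E : Node d
  | V : Fin d → Node d
  | Y : Node d
deriving DecidableEq

/-- A directed acyclic graph on `{E} ∪ {1, …, d} ∪ {Y}` in which `E` has no
parents (`E` is exogenous). -/
structure CGraph (d : ℕ) where
  adj : Node d → Node d → Prop
  acyclic : ∀ v, ¬ Relation.TransGen adj v v
  exogenous : ∀ v, ¬ adj v Node.E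

namespace CGraph

variable {d : ℕ} (G : CGraph d)

/-- Undirected adjacency: an edge between `u` and `v` in either direction. -/
def Edge (u v : Node d) : Prop := G.adj u v ∨ G.adj v u

/-- `p` is a path between `a` and `b`: a duplicate-free list of nodes starting
at `a`, ending at `b`, with consecutive nodes adjacent (in either direction). -/
def IsPath (p : List (Node d)) (a b : Node d) : Prop :=
  p.head? = some a ∧ p.getLast? = some b ∧ p.Nodup ∧ p.Chain' G.Edge

/-- `x` is a (strict) descendant of `v`. -/
def Desc (v x : Node d) : Prop := Relation.TransGen G.adj v x

/-- The consecutive triple `u, m, w` on a path blocks the path given `C`: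
either `m` is a non-collider lying in `C`, or `m` is a collider such that
neither `m` nor any of its descendants lies in `C`. -/
def BlockedAt (C : Set (Node d)) (u m w : Node d) : Prop :=
  (¬ (G.adj u m ∧ G.adj w m) ∧ m ∈ C) ∨
  ((G.adj u m ∧ G.adj w m) ∧ m ∉ C ∧ ∀ x, G.Desc m x → x ∉ C)

/-- A path `p` is blocked by `C` if some consecutive triple on it blocks it. -/
def Blocked (C : Set (Node d)) (p : List (Node d)) : Prop :=
  ∃ q u m w r, p = q ++ u :: m :: w :: r ∧ G.BlockedAt C u m w

/-- `a` and `b` are d-separated given `C`: every path between them is blocked. -/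
def DSep (a b : Node d) (C : Set (Node d)) : Prop :=
  ∀ p, G.IsPath p a b → G.Blocked C p

/-- `S ⊆ {1, …, d}` is invariant if `E` and `Y` are d-separated given `S`. -/
def Invariant (S : Set (Fin d)) : Prop := G.DSep Node.E Node.Y (Node.V '' S)

/-- `S` is minimally invariant if it is invariant and no strict subset of `S`
is invariant. -/
def MinInvariant (S : Set (Fin d)) : Prop :=
  G.Invariant S ∧ ∀ S', S' ⊂ S → ¬ G.Invariant S'

/-- `S_AS`: the union of all minimally invariant sets. -/
def SAS : Set (Fin d) := ⋃₀ {S | G.MinInvariant S}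

/-- `S_ICP`: the intersection of all invariant sets (`∅` if there are none). -/
def SICP : Set (Fin d) :=
  {j | (∃ S, G.Invariant S) ∧ ∀ S, G.Invariant S → j ∈ S}

/-- `S_AS^m`: the union of all minimally invariant sets of cardinality `≤ m`. -/
def SASm (m : ℕ) : Set (Fin d) := ⋃₀ {S | G.MinInvariant S ∧ S.ncard ≤ m}

/-- The parents of `Y` among `{1, …, d}`. -/
def paY : Set (Fin d) := {j | G.adj (Node.V j) Node.Y}

/-- The children of `E` among `{1, …, d}`. -/
def chE : Set (Fin d) := {j | G.adj Node.E (Node.V j)}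

/-- The ancestors of `Y` among `{1, …, d}`. -/
def anY : Set (Fin d) := {j | Relation.TransGen G.adj (Node.V j) Node.Y}

/-- `PA(A)`: the union of the parent sets of the elements of `A ⊆ {1, …, d}`. -/
def paOf (A : Set (Fin d)) : Set (Fin d) := {j | ∃ i ∈ A, G.adj (Node.V j) (Node.V i)}

end CGraph

namespace CGraph

variable {d : ℕ} (G : CGraph d)

lemma edge_symm {u v : Node d} (h : G.Edge u v) : G.Edge v u := h.symm

lemma desc_not_mem_paY {x : Node d} (hx : G.Desc Node.Y x) :
    x ∉ Node.V '' G.paY := by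
  rintro ⟨j, hj, rfl⟩
  exact G.acyclic Node.Y (hx.trans (Relation.TransGen.single hj))

lemma blockedAt_symm {C : Set (Node d)} {u m w : Node d}
    (h : G.BlockedAt C u m w) : G.BlockedAt C w m u := by
  rcases h with ⟨h1, h2⟩ | ⟨⟨h1, h2⟩, h3⟩
  · exact Or.inl ⟨fun hc => h1 ⟨hc.2, hc.1⟩, h2⟩
  · exact Or.inr ⟨⟨h2, h1⟩, h3⟩

lemma blocked_append {C : Set (Node d)} {l : List (Node d)}
    (q0 : List (Node d)) (h : G.Blocked C l) : G.Blocked C (q0 ++ l) := by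
  obtain ⟨q, u, m, w, r, hl, hb⟩ := h
  exact ⟨q0 ++ q, u, m, w, r, by rw [hl, List.append_assoc], hb⟩

lemma blocked_of_reverse {C : Set (Node d)} {p : List (Node d)}
    (h : G.Blocked C p.reverse) : G.Blocked C p := by
  obtain ⟨q, u, m, w, r, hl, hb⟩ := h
  refine ⟨r.reverse, w, m, u, q.reverse, ?_, G.blockedAt_symm hb⟩
  have := congrArg List.reverse hl
  rw [List.reverse_reverse] at this
  rw [this]
  simp

/-- Collider hunt: walking back along a path whose nodes are descendants of
`Y` until an incoming edge creates a blocked collider. -/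
lemma blocked_aux (s : List (Node d)) : ∀ m w : Node d, G.adj w m →
    G.Desc Node.Y m → (m :: s).getLast? = some Node.E →
    (m :: s).Chain' G.Edge →
    G.Blocked (Node.V '' G.paY) (w :: m :: s) := by
  induction s with
  | nil =>
    intro m w hwm _ hlast _
    simp at hlast
    subst hlast
    exact absurd hwm (G.exogenous w)
  | cons a s ih =>
    intro m w hwm hYm hlast hchain
    obtain ⟨hedge, hchain'⟩ := List.isChain_cons_cons.mp hchain
    rcases hedge with hma | ham
    · -- edge m → a : continue walking
      have hYa : G.Desc Node.Y a := hYm.tail hma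
      have hlast' : (a :: s).getLast? = some Node.E := by
        rwa [List.getLast?_cons_cons] at hlast
      have := ih a m hma hYa hlast' hchain'
      exact G.blocked_append [w] this
    · -- edge a → m : m is a collider, blocked
      refine ⟨[], w, m, a, s, rfl, Or.inr ⟨⟨hwm, ham⟩, G.desc_not_mem_paY hYm,
        fun x hx => G.desc_not_mem_paY (hYm.trans hx)⟩⟩

lemma paY_invariant (h : ¬ G.adj Node.E Node.Y) : G.Invariant G.paY := by
  intro p hp
  obtain ⟨hhead, hlast, hnodup, hchain⟩ := hp
  apply G.blocked_of_reverse
  have hrh : p.reverse.head? = some Node.Y := by rwa [List.head?_reverse]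
  have hrl : p.reverse.getLast? = some Node.E := by rwa [List.getLast?_reverse]
  have hrn : p.reverse.Nodup := List.nodup_reverse.mpr hnodup
  have hrc : p.reverse.Chain' G.Edge := by
    show p.reverse.IsChain G.Edge
    rw [List.isChain_reverse]
    exact hchain.imp fun a b hab => hab.symm
  set rp := p.reverse with hrp
  clear_value rp
  clear hhead hlast hnodup hchain hrp
  match rp, hrh with
  | Node.Y :: rest, _ =>
    match rest, hrl with
    | [], hrl => simp at hrl
    | v :: rest', hrl =>
      obtain ⟨hedge, hchain'⟩ := List.isChain_cons_cons.mp hrc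
      have hlast' : (v :: rest').getLast? = some Node.E := by
        rwa [List.getLast?_cons_cons] at hrl
      rcases hedge with hYv | hvY
      · -- edge Y → v : collider hunt
        exact G.blocked_aux rest' v Node.Y hYv (Relation.TransGen.single hYv)
          hlast' hchain'
      · -- edge v → Y : v is a parent of Y, a non-collider in the set
        match rest', hlast' with
        | [], hlast' =>
          simp at hlast'
          subst hlast'
          exact absurd hvY h
        | b :: rest'', hlast' =>
          have hvV : ∃ j, v = Node.V j := by
            match v with
            | Node.V j => exact ⟨j, rfl⟩
            | Node.Y =>
              simp at hrn
            | Node.E =>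
              exfalso
              have hglast : (b :: rest'').getLast? = some Node.E := by
                rwa [List.getLast?_cons_cons] at hlast'
              have hmem : Node.E ∈ b :: rest'' := by
                obtain ⟨hne, heq⟩ := List.mem_getLast?_eq_getLast
                  (Option.mem_def.mpr hglast)
                exact heq ▸ List.getLast_mem hne
              have h1 := (List.nodup_cons.mp hrn).2
              exact (List.nodup_cons.mp h1).1 hmem
          obtain ⟨j, rfl⟩ := hvV
          refine ⟨[], Node.Y, Node.V j, b, rest'', rfl, Or.inl ⟨?_, ⟨j, hvY, rfl⟩⟩⟩
          rintro ⟨hYv, -⟩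
          exact G.acyclic Node.Y ((Relation.TransGen.single hYv).tail hvY)

lemma exists_minInvariant_aux :
    ∀ n (S : Set (Fin d)), S.ncard ≤ n → G.Invariant S →
      ∃ M, M ⊆ S ∧ G.MinInvariant M := by
  intro n
  induction n with
  | zero =>
    intro S hcard hS
    have hS0 : S = ∅ := (Set.ncard_eq_zero S.toFinite).mp (Nat.le_zero.mp hcard)
    subst hS0
    exact ⟨∅, subset_rfl, hS, fun S' hss _ => hss.ne (Set.subset_eq_empty hss.subset rfl)⟩
  | succ n ih =>
    intro S hcard hS
    by_cases h' : ∃ S', S' ⊂ S ∧ G.Invariant S'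
    · obtain ⟨S', hss, hS'⟩ := h'
      have hlt : S'.ncard < S.ncard := Set.ncard_lt_ncard hss S.toFinite
      obtain ⟨M, hM1, hM2⟩ := ih S' (by omega) hS'
      exact ⟨M, hM1.trans hss.subset, hM2⟩
    · push_neg at h'
      exact ⟨S, subset_rfl, hS, fun S' hss => h' S' hss⟩

lemma sicp_subset {S : Set (Fin d)} (hS : G.Invariant S) : G.SICP ⊆ S :=
  fun _ hj => hj.2 S hS

end CGraph

/-- if `E` is not a parent of `Y`, then `S_ICP = S_AS` if and
only if `S_ICP` is invariant. -/
theorem SICP_eq_SAS_iff_invariant {d : ℕ} (G : CGraph d)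
    (h : ¬ G.adj Node.E Node.Y) :
    G.SICP = G.SAS ↔ G.Invariant G.SICP := by
  constructor
  · intro heq
    have hpa := G.paY_invariant h
    obtain ⟨M, -, hMmin⟩ := G.exists_minInvariant_aux G.paY.ncard G.paY le_rfl hpa
    have h1 : G.SICP ⊆ M := G.sicp_subset hMmin.1
    have h2 : M ⊆ G.SAS := Set.subset_sUnion_of_mem hMmin
    have hME : G.SICP = M := Set.Subset.antisymm h1 (heq ▸ h2)
    rw [hME]
    exact hMmin.1
  · intro hinv
    have hmin : G.MinInvariant G.SICP := by
      refine ⟨hinv, fun S' hss hS' => absurd (G.sicp_subset hS') hss.not_subset⟩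
    have huniq : ∀ M, G.MinInvariant M → M = G.SICP := by
      intro M hM
      by_contra hne
      have hss : G.SICP ⊂ M := (G.sicp_subset hM.1).ssubset_of_ne (Ne.symm hne)
      exact hM.2 G.SICP hss hinv
    ext j
    constructor
    · intro hj
      exact Set.mem_sUnion.mpr ⟨G.SICP, hmin, hj⟩
    · intro hj
      obtain ⟨M, hM, hjM⟩ := Set.mem_sUnion.mp hj
      exact (huniq M hM) ▸ hjM
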